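/- Every cancellative sequence of sets in a Banach space is admissible for testing compactness. That is, if every subsequence $f_{i_1(k)}\in F_{i_1(k)}$ has a further subsequence $f_{i_2(k)}$ with $\lim_{K\to\infty}\frac{1}{K}\|\sum_{k=1}^K f_{i_2(k)}\|_X=0$, then for every Banach space $Y$ and every compact linear operator $T:X\to Y$ one has $\limsup_{i\to\infty}\sup_{f_i\in F_i}\|Tf_i\|_Y=0$. -/

import Mathlib

open Filter Topology

private lemma pow4_ge (n : ℕ) : (n : ℝ) + 1 ≤ 4 ^ n := by
  induction n with
  | zero => norm_num
  | succ n ih =>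
    have h1 : (1:ℝ) ≤ 4 ^ n := one_le_pow₀ (by norm_num)
    push_cast
    calc ((n:ℝ) + 1) + 1 ≤ 4 ^ n + 1 := by linarith
      _ ≤ 4 ^ n * 4 := by linarith
      _ = 4 ^ (n+1) := by ring

/-- Every cancellative sequence of sets in a Banach space is admissible for
testing compactness. -/
theorem stmt2.{u, v} {X : Type u} [NormedAddCommGroup X] [NormedSpace ℂ X]
    [CompleteSpace X] (F : ℕ → Set X)
    (hcanc : ∀ (i₁ : ℕ → ℕ), StrictMono i₁ → ∀ f : ℕ → X, (∀ k, f k ∈ F (i₁ k)) →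
      ∃ i₂ : ℕ → ℕ, StrictMono i₂ ∧
        Tendsto (fun K : ℕ => ‖∑ k ∈ Finset.range K, f (i₂ k)‖ / K) atTop (nhds 0)) :
    ∀ (Y : Type v) [NormedAddCommGroup Y] [NormedSpace ℂ Y] [CompleteSpace Y]
      (T : X →L[ℂ] Y), IsCompactOperator ⇑T →
        ∀ ε : ℝ, 0 < ε → ∃ N : ℕ, ∀ i ≥ N, ∀ f ∈ F i, ‖T f‖ ≤ ε := by
  intro Y _ _ _ T hT ε hε
  by_contra hcon
  push_neg at hcon
  -- extract a strictly monotone sequence of indices with bad elements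
  have hfreq : ∃ᶠ i in atTop, ∃ f ∈ F i, ε < ‖T f‖ := by
    rw [frequently_atTop]
    intro N
    obtain ⟨i, hiN, g, hg, hTg⟩ := hcon N
    exact ⟨i, hiN, g, hg, hTg⟩
  obtain ⟨i₁, hi₁, hP⟩ := extraction_of_frequently_atTop hfreq
  choose f hfF hTf using hP
  by_cases hbd : ∃ C : ℝ, ∃ᶠ k in atTop, ‖f k‖ ≤ C
  · -- Case A : a bounded subsequence exists
    obtain ⟨C, hC⟩ := hbd
    obtain ⟨j, hjmono, hjC⟩ := extraction_of_frequently_atTop hC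
    have hTl : IsCompactOperator ⇑(T.toLinearMap) := hT
    have hKc := hTl.isCompact_closure_image_of_bounded
      (Metric.isBounded_closedBall (x := (0:X)) (r := C))
    have hmem : ∀ n, T (f (j n)) ∈ closure (⇑(T.toLinearMap) '' Metric.closedBall (0:X) C) :=
      fun n => subset_closure ⟨f (j n), Metric.mem_closedBall.2 (by simpa using hjC n), rfl⟩
    obtain ⟨y, _, m, hmmono, hum⟩ :=
      hKc.tendsto_subseq (x := fun n => T (f (j n))) hmem
    have hyε : ε ≤ ‖y‖ :=
      ge_of_tendsto' hum.norm (fun k => (hTf (j (m k))).le)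
    obtain ⟨i₂, hi₂, hces⟩ := hcanc (i₁ ∘ j ∘ m) (hi₁.comp (hjmono.comp hmmono))
      (f ∘ j ∘ m) (fun k => hfF _)
    set g : ℕ → X := fun k => f (j (m (i₂ k))) with hg
    replace hces : Tendsto (fun K : ℕ => ‖∑ k ∈ Finset.range K, g k‖ / K) atTop (𝓝 0) := hces
    -- the Cesàro averages of T g tend to y
    have hTg : Tendsto (fun k => T (g k)) atTop (𝓝 y) :=
      hum.comp hi₂.tendsto_atTop
    have hces' : Tendsto (fun n : ℕ => ((n : ℝ)⁻¹) • ∑ i ∈ Finset.range n, T (g i))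
        atTop (𝓝 y) := hTg.cesaro_smul
    -- but they also tend to 0
    have hkey : ∀ K : ℕ, ‖((K : ℝ)⁻¹) • ∑ i ∈ Finset.range K, T (g i)‖
        ≤ ‖T‖ * (‖∑ k ∈ Finset.range K, g k‖ / K) := by
      intro K
      have h1 := T.le_opNorm (∑ k ∈ Finset.range K, g k)
      have h2 : (0:ℝ) ≤ (K:ℝ)⁻¹ := by positivity
      calc ‖((K : ℝ)⁻¹) • ∑ i ∈ Finset.range K, T (g i)‖
          = (K:ℝ)⁻¹ * ‖T (∑ k ∈ Finset.range K, g k)‖ := by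
            rw [← map_sum, norm_smul, norm_inv, Real.norm_natCast]
        _ ≤ (K:ℝ)⁻¹ * (‖T‖ * ‖∑ k ∈ Finset.range K, g k‖) :=
            mul_le_mul_of_nonneg_left h1 h2
        _ = ‖T‖ * (‖∑ k ∈ Finset.range K, g k‖ / K) := by
            rw [div_eq_mul_inv]; ring
    have hz : Tendsto (fun K : ℕ => ‖T‖ * (‖∑ k ∈ Finset.range K, g k‖ / K))
        atTop (𝓝 0) := by
      simpa using hces.const_mul ‖T‖
    have h0 : Tendsto (fun n : ℕ => ((n : ℝ)⁻¹) • ∑ i ∈ Finset.range n, T (g i))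
        atTop (𝓝 0) := squeeze_zero_norm hkey hz
    have : y = 0 := tendsto_nhds_unique hces' h0
    rw [this, norm_zero] at hyε
    linarith
  · -- Case B : norms tend to infinity; build a rapidly growing subsequence
    push_neg at hbd
    have hbig : ∀ (n : ℕ) (b : ℝ), ∃ k, n ≤ k ∧ b < ‖f k‖ := by
      intro n b
      have hev : ∀ᶠ k in atTop, b < ‖f k‖ := by
        exact hbd b
      obtain ⟨N, hN⟩ := eventually_atTop.mp hev
      exact ⟨max n N, le_max_left _ _, hN _ (le_max_right _ _)⟩
    choose idx h1 h2 using hbig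
    obtain ⟨j, hj0, hjs⟩ : ∃ j : ℕ → ℕ, (1 < ‖f (j 0)‖) ∧ ∀ k, j k < j (k+1) ∧
        4 * ∑ m ∈ Finset.range (j k + 1), ‖f m‖ < ‖f (j (k+1))‖ := by
      refine ⟨fun k => Nat.rec (idx 0 1)
        (fun _ p => idx (p+1) (4 * ∑ m ∈ Finset.range (p+1), ‖f m‖)) k,
        h2 0 1, fun k => ⟨Nat.lt_of_succ_le (h1 _ _), h2 _ _⟩⟩
    have hjmono : StrictMono j := strictMono_nat_of_lt_succ (fun k => (hjs k).1)
    have hlow : ∀ k, (4:ℝ) ^ k ≤ ‖f (j k)‖ := by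
      intro k
      induction k with
      | zero => simpa using hj0.le
      | succ k ih =>
        have hmem : j k ∈ Finset.range (j k + 1) := Finset.mem_range.2 (Nat.lt_succ_self _)
        have hsingle : ‖f (j k)‖ ≤ ∑ m ∈ Finset.range (j k + 1), ‖f m‖ :=
          Finset.single_le_sum (fun m _ => norm_nonneg (f m)) hmem
        have := (hjs k).2
        have h4 : (4:ℝ) ^ (k+1) = 4 * 4 ^ k := by ring
        nlinarith
    obtain ⟨i₂, hi₂, hces⟩ := hcanc (i₁ ∘ j) (hi₁.comp hjmono) (f ∘ j) (fun k => hfF _)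
    -- every Cesàro average is at least 3/4
    have claim : ∀ K' : ℕ, (3/4 : ℝ) ≤ ‖∑ k ∈ Finset.range (K'+1), (f ∘ j) (i₂ k)‖ / ((K':ℝ)+1) := by
      intro K'
      set L := i₂ K' with hL
      have hKL : K' ≤ L := hi₂.le_apply
      have hsum' : ‖∑ k ∈ Finset.range K', (f ∘ j) (i₂ k)‖ ≤ (1/4) * ‖f (j L)‖ := by
        rcases Nat.eq_zero_or_pos K' with h0 | hpos
        · simp only [h0, Finset.range_zero, Finset.sum_empty, norm_zero]
          positivity
        · have hL1 : 1 ≤ L := hpos.trans_le hKL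
          have hinj : ∀ a ∈ Finset.range K', ∀ b ∈ Finset.range K',
              j (i₂ a) = j (i₂ b) → a = b :=
            fun a _ b _ h => hi₂.injective (hjmono.injective h)
          have himg : (Finset.range K').image (fun k => j (i₂ k))
              ⊆ Finset.range (j (L-1) + 1) := by
            intro x hx
            simp only [Finset.mem_image, Finset.mem_range] at hx ⊢
            obtain ⟨k, hk, rfl⟩ := hx
            have : i₂ k ≤ L - 1 := Nat.le_pred_of_lt (hi₂ hk)
            exact Nat.lt_succ_of_le (hjmono.monotone this)
          have hspec := (hjs (L-1)).2
          rw [Nat.sub_add_cancel hL1] at hspec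
          calc ‖∑ k ∈ Finset.range K', (f ∘ j) (i₂ k)‖
              ≤ ∑ k ∈ Finset.range K', ‖f (j (i₂ k))‖ := norm_sum_le _ _
            _ = ∑ x ∈ (Finset.range K').image (fun k => j (i₂ k)), ‖f x‖ := by
                rw [Finset.sum_image hinj]
            _ ≤ ∑ x ∈ Finset.range (j (L-1) + 1), ‖f x‖ :=
                Finset.sum_le_sum_of_subset_of_nonneg himg (fun x _ _ => norm_nonneg _)
            _ ≤ (1/4) * ‖f (j L)‖ := by linarith
      have htri : ‖f (j L)‖ ≤ ‖∑ k ∈ Finset.range (K'+1), (f ∘ j) (i₂ k)‖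
          + ‖∑ k ∈ Finset.range K', (f ∘ j) (i₂ k)‖ := by
        have heq : f (j L) = (∑ k ∈ Finset.range (K'+1), (f ∘ j) (i₂ k))
            - ∑ k ∈ Finset.range K', (f ∘ j) (i₂ k) := by
          rw [Finset.sum_range_succ]
          simp [hL]
        rw [heq]
        exact norm_sub_le _ _
      have hlowL : ((K':ℝ)+1) ≤ ‖f (j L)‖ := by
        have h1 : ((K':ℝ)+1) ≤ 4 ^ K' := pow4_ge K'
        have h2 : (4:ℝ) ^ K' ≤ 4 ^ L := pow_le_pow_right₀ (by norm_num) hKL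
        have h3 := hlow L
        linarith
      rw [le_div_iff₀ (by positivity)]
      linarith
    have hev := hces.eventually (gt_mem_nhds (show (0:ℝ) < 3/4 by norm_num))
    obtain ⟨K, hK2, hK1⟩ := ((eventually_ge_atTop 1).and hev).exists
    obtain ⟨K', rfl⟩ : ∃ K', K = K' + 1 := ⟨K - 1, (Nat.succ_pred_eq_of_pos hK2).symm⟩
    have := claim K'
    push_cast at hK1
    linarith
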